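/- Under the VM-HPE conditions with σ ∈ [0,1) and metric compatibility M_{i+1} ⪯ (1+c_i)M_i, the ergodic epsilon εᵃ_k := (1/k)∑_{i=1}^{k}⟨r_i, z̃_i − z̃ᵃ_k⟩ (where z̃ᵃ_k = (1/k)∑ z̃_i and r_i = M_i(z_{i−1} − z_i)) satisfies εᵃ_k ≤ (1/(2k))[η₀ + ‖z̃ᵃ_k − z₀‖_{M₀}² + ∑_{i=1}^{k} c_{i−1}‖z̃ᵃ_k − z_{i−1}‖_{M_{i−1}}²]. -/

import Mathlib

open RealInnerProductSpace Finset

lemma sq_expand16 {Z : Type*} [NormedAddCommGroup Z] [InnerProductSpace ℝ Z]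
    (N : Z →ₗ[ℝ] Z) (hsym : ∀ u v : Z, ⟪N u, v⟫ = ⟪u, N v⟫)
    (p q s : Z) :
    2 * ⟪N (p - q), s⟫ =
      ⟪N (p + s), p + s⟫ - ⟪N (q + s), q + s⟫ - ⟪N p, p⟫ + ⟪N q, q⟫ := by
  have h1 : ⟪N s, p⟫ = ⟪N p, s⟫ := by rw [hsym, real_inner_comm]
  have h2 : ⟪N s, q⟫ = ⟪N q, s⟫ := by rw [hsym, real_inner_comm]
  simp only [map_add, map_sub, inner_add_left, inner_add_right, inner_sub_left]
  linarith

lemma qflip16 {Z : Type*} [NormedAddCommGroup Z] [InnerProductSpace ℝ Z]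
    (N : Z →ₗ[ℝ] Z) (a b : Z) :
    ⟪N (a - b), a - b⟫ = ⟪N (b - a), b - a⟫ := by
  rw [← neg_sub b a, map_neg, inner_neg_neg]

theorem stmt16 {Z : Type*} [NormedAddCommGroup Z] [InnerProductSpace ℝ Z]
    [FiniteDimensional ℝ Z] (T : Z → Set Z)
    (hmono : ∀ z z' v v', v ∈ T z → v' ∈ T z' → 0 ≤ ⟪v - v', z - z'⟫)
    (M : ℕ → (Z →ₗ[ℝ] Z))
    (hsym : ∀ k, ∀ u v : Z, ⟪M k u, v⟫ = ⟪u, M k v⟫)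
    (hpsd : ∀ k, ∀ u : Z, 0 ≤ ⟪M k u, u⟫)
    (σ : ℝ) (hσ0 : 0 ≤ σ) (hσ1 : σ < 1)
    (η : ℕ → ℝ) (hη : ∀ k, 0 ≤ η k)
    (c : ℕ → ℝ) (hc : ∀ k, 0 ≤ c k)
    (hcomp : ∀ i ≥ 1, ∀ u : Z, ⟪M i u, u⟫ ≤ (1 + c (i - 1)) * ⟪M (i - 1) u, u⟫)
    (z ztil : ℕ → Z)
    (hincl : ∀ k ≥ 1, M k (z (k - 1) - z k) ∈ T (ztil k))
    (herr : ∀ k : ℕ, 1 ≤ k →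
      ⟪M k (z k - ztil k), z k - ztil k⟫ + η k ≤
        σ * ⟪M k (z (k - 1) - ztil k), z (k - 1) - ztil k⟫ + η (k - 1)) :
    ∀ k : ℕ, 1 ≤ k →
      (k : ℝ)⁻¹ * ∑ i ∈ Icc 1 k,
          ⟪M i (z (i - 1) - z i), ztil i - (k : ℝ)⁻¹ • ∑ j ∈ Icc 1 k, ztil j⟫ ≤
        (1 / (2 * k)) * (η 0 +
          ⟪M 0 (((k : ℝ)⁻¹ • ∑ j ∈ Icc 1 k, ztil j) - z 0),
            ((k : ℝ)⁻¹ • ∑ j ∈ Icc 1 k, ztil j) - z 0⟫ +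
          ∑ i ∈ Icc 1 k, c (i - 1) *
            ⟪M (i - 1) (((k : ℝ)⁻¹ • ∑ j ∈ Icc 1 k, ztil j) - z (i - 1)),
              ((k : ℝ)⁻¹ • ∑ j ∈ Icc 1 k, ztil j) - z (i - 1)⟫) := by
  intro k hk
  set x : Z := (k : ℝ)⁻¹ • ∑ j ∈ Icc 1 k, ztil j with hx
  set f : ℕ → ℝ := fun i => ⟪M i (x - z i), x - z i⟫ + η i with hf
  -- pointwise key inequality
  have key : ∀ i ∈ Icc 1 k,
      2 * ⟪M i (z (i - 1) - z i), ztil i - x⟫ ≤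
        (f (i - 1) - f i) +
          c (i - 1) * ⟪M (i - 1) (x - z (i - 1)), x - z (i - 1)⟫ := by
    intro i hi
    have hi1 : 1 ≤ i := (mem_Icc.mp hi).1
    have hid := sq_expand16 (M i) (hsym i)
      (z (i - 1) - ztil i) (z i - ztil i) (ztil i - x)
    simp only [sub_sub_sub_cancel_right, sub_add_sub_cancel] at hid
    -- error bound
    have hQp : 0 ≤ ⟪M i (z (i - 1) - ztil i), z (i - 1) - ztil i⟫ := hpsd i _
    have he := herr i hi1
    have herr' : ⟪M i (z i - ztil i), z i - ztil i⟫ -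
        ⟪M i (z (i - 1) - ztil i), z (i - 1) - ztil i⟫ ≤ η (i - 1) - η i := by
      nlinarith
    -- metric compatibility
    have hcmp := hcomp i hi1 (z (i - 1) - x)
    have hQc : 0 ≤ ⟪M (i - 1) (z (i - 1) - x), z (i - 1) - x⟫ := hpsd _ _
    have hfe1 : ⟪M (i - 1) (z (i - 1) - x), z (i - 1) - x⟫ =
        ⟪M (i - 1) (x - z (i - 1)), x - z (i - 1)⟫ := qflip16 _ _ _
    have hfe2 : ⟪M i (z (i - 1) - x), z (i - 1) - x⟫ =
        ⟪M i (x - z (i - 1)), x - z (i - 1)⟫ := qflip16 _ _ _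
    have hfe3 : ⟪M i (z i - x), z i - x⟫ = ⟪M i (x - z i), x - z i⟫ := qflip16 _ _ _
    rw [hfe2, hfe1] at hcmp
    rw [hfe2, hfe3] at hid
    simp only [hf]
    nlinarith [hid, herr', hcmp]
  -- sum up
  have hsum : ∑ i ∈ Icc 1 k, 2 * ⟪M i (z (i - 1) - z i), ztil i - x⟫ ≤
      ∑ i ∈ Icc 1 k, ((f (i - 1) - f i) +
        c (i - 1) * ⟪M (i - 1) (x - z (i - 1)), x - z (i - 1)⟫) :=
    Finset.sum_le_sum key
  have htel : ∀ n : ℕ, ∑ i ∈ Icc 1 n, (f (i - 1) - f i) = f 0 - f n := by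
    intro n
    induction n with
    | zero => simp
    | succ n ih =>
      rw [Finset.sum_Icc_succ_top (by omega : 1 ≤ n + 1), ih]
      simp only [Nat.add_sub_cancel]
      ring
  rw [Finset.sum_add_distrib, htel k] at hsum
  have hfk : 0 ≤ f k := add_nonneg (hpsd _ _) (hη _)
  have h2S : 2 * ∑ i ∈ Icc 1 k, ⟪M i (z (i - 1) - z i), ztil i - x⟫ ≤
      η 0 + ⟪M 0 (x - z 0), x - z 0⟫ +
        ∑ i ∈ Icc 1 k, c (i - 1) * ⟪M (i - 1) (x - z (i - 1)), x - z (i - 1)⟫ := by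
    rw [Finset.mul_sum]
    have : f 0 = ⟪M 0 (x - z 0), x - z 0⟫ + η 0 := rfl
    linarith [hsum]
  have hk0 : (0 : ℝ) < k := by exact_mod_cast hk
  have heq : (k : ℝ)⁻¹ * ∑ i ∈ Icc 1 k, ⟪M i (z (i - 1) - z i), ztil i - x⟫ =
      (1 / (2 * k)) * (2 * ∑ i ∈ Icc 1 k, ⟪M i (z (i - 1) - z i), ztil i - x⟫) := by
    field_simp
  rw [heq]
  have hpos : (0 : ℝ) ≤ 1 / (2 * k) := by positivity
  exact mul_le_mul_of_nonneg_left h2S hpos
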